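/- arXiv:1605.04355 — 3 statements merged into one kernel-verified Lean document; each statement's English description precedes it below -/
import Mathlib

section
/- For the geodesic ball of radius 1 in the hyperbolic plane (h(t) = sinh t, m=2), ∫_0^1 (∫_0^s sinh(t)dt)/sinh(s) ds = log((1+e)²/(4e)). -/
open Real

lemma integral_sinh' (s : ℝ) : (∫ t in (0:ℝ)..s, Real.sinh t) = Real.cosh s - 1 := by
  rw [intervalIntegral.integral_eq_sub_of_hasDerivAt
      (fun t _ => Real.hasDerivAt_cosh t) (Real.continuous_sinh.intervalIntegrable 0 s),
    Real.cosh_zero]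

lemma eqOn_tanh :
    Set.EqOn (fun s : ℝ => (∫ t in (0:ℝ)..s, Real.sinh t) / Real.sinh s)
      (fun s : ℝ => Real.tanh (s / 2)) (Set.uIcc (0:ℝ) 1) := by
  intro s hs
  rw [Set.uIcc_of_le (by norm_num : (0:ℝ) ≤ 1)] at hs
  simp only [integral_sinh']
  rcases eq_or_lt_of_le hs.1 with h0 | h0
  · simp [← h0]
  · have hc : Real.cosh (s / 2) ≠ 0 := (Real.cosh_pos (s / 2)).ne'
    have hsn : Real.sinh (s / 2) ≠ 0 := by
      have := Real.sinh_pos_iff.2 (by linarith : 0 < s / 2); linarith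
    have h1 : Real.cosh s - 1 = 2 * Real.sinh (s / 2) ^ 2 := by
      have h3 : Real.cosh (2 * (s / 2)) = Real.cosh (s/2) ^ 2 + Real.sinh (s/2) ^ 2 :=
        Real.cosh_two_mul _
      have h2 : Real.cosh (s/2) ^ 2 = Real.sinh (s/2) ^ 2 + 1 := Real.cosh_sq _
      have hss : 2 * (s / 2) = s := by ring
      rw [hss] at h3
      linarith
    have h2 : Real.sinh s = 2 * Real.sinh (s / 2) * Real.cosh (s / 2) := by
      have h3 := Real.sinh_two_mul (s / 2)
      have hss : 2 * (s / 2) = s := by ring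
      rw [hss] at h3; linarith
    simp only [h1, h2, Real.tanh_eq_sinh_div_cosh]
    field_simp

lemma hasDeriv_F (s : ℝ) :
    HasDerivAt (fun x : ℝ => 2 * Real.log (Real.cosh (x / 2))) (Real.tanh (s / 2)) s := by
  have hc : Real.cosh (s / 2) ≠ 0 := (Real.cosh_pos (s / 2)).ne'
  have hg : HasDerivAt (fun x : ℝ => Real.cosh (x / 2)) (Real.sinh (s / 2) * (1 / 2)) s := by
    have := (Real.hasDerivAt_cosh (s / 2)).comp s ((hasDerivAt_id s).div_const 2)
    exact this.congr_deriv (by norm_num)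
  have hl := (Real.hasDerivAt_log hc).comp s hg
  have := hl.const_mul (2 : ℝ)
  refine this.congr_deriv ?_
  rw [Real.tanh_eq_sinh_div_cosh]
  field_simp

/-- For the unit geodesic ball in the hyperbolic plane (`h = sinh`, `m = 2`),
`∫_0^1 (∫_0^s sinh t dt)/sinh s ds = log((1+e)²/(4e))`, the sum of
reciprocals of the radial Dirichlet eigenvalues. -/
theorem integral_VS_hyperbolic :
    (∫ s in (0:ℝ)..1, (∫ t in (0:ℝ)..s, Real.sinh t) / Real.sinh s) =
      Real.log ((1 + Real.exp 1) ^ 2 / (4 * Real.exp 1)) := by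
  rw [intervalIntegral.integral_congr eqOn_tanh]
  have hcont : Continuous fun s : ℝ => Real.tanh (s / 2) := by
    have : Continuous Real.tanh := by
      simp only [funext fun x => Real.tanh_eq_sinh_div_cosh (x := x)]
      exact Real.continuous_sinh.div Real.continuous_cosh fun x => (Real.cosh_pos x).ne'
    exact this.comp (continuous_id.div_const 2)
  rw [intervalIntegral.integral_eq_sub_of_hasDerivAt
      (fun s _ => hasDeriv_F s) (hcont.intervalIntegrable 0 1)]
  simp only [zero_div, Real.cosh_zero, Real.log_one, mul_zero, sub_zero]
  have h2 : 2 * Real.log (Real.cosh (1 / 2)) = Real.log (Real.cosh (1 / 2) ^ 2) := by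
    rw [Real.log_pow]; push_cast; ring
  rw [h2]
  congr 1
  have he : Real.exp (1 / 2) * Real.exp (1 / 2) = Real.exp 1 := by
    rw [← Real.exp_add]; norm_num
  have hei : Real.exp (-(1 / 2)) * Real.exp (1 / 2) = 1 := by
    rw [← Real.exp_add]; norm_num
  have hep : (0:ℝ) < Real.exp 1 := Real.exp_pos 1
  have hep2 : (0:ℝ) < Real.exp (1/2) := Real.exp_pos _
  rw [Real.cosh_eq]
  field_simp
  nlinarith [he, hei, sq_nonneg (Real.exp (1/2))]
end

section
/- With α = l+m-1, β = 2l+m-2, the L²-norm of the Green function g_l satisfies ∫_0^r ∫_0^r g_l(x,y)² ω_m² x^{m-1} y^{m-1} dy dx = r⁴/(2(2l+m)²(2+2l+m)). -/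
open MeasureTheory Set

/-- The Green function `g_l(x,y) = x^l y^α/(β ω y^{m-1})·(1/max(x,y)^β − 1/r^β)`
of `L_l u = u'' + (m-1)u'/x − l(l+m-2)u/x²`, with `α = l+m-1`, `β = 2l+m-2`. -/
noncomputable def greenBessel (l m : ℕ) (ω r x y : ℝ) : ℝ :=
  x ^ l * Real.rpow y ((l:ℝ) + (m:ℝ) - 1) / ((2 * (l:ℝ) + (m:ℝ) - 2) * ω * y ^ (m - 1)) *
    (1 / Real.rpow (max x y) (2 * (l:ℝ) + (m:ℝ) - 2) - 1 / Real.rpow r (2 * (l:ℝ) + (m:ℝ) - 2))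

section Aux

open Function

/-- Pointwise simplification of the squared weighted Green function. -/
lemma green_sq_eq (l p K : ℕ) (hK : 2 * l + p = K + 1) (hK1 : 1 ≤ K)
    (ω r : ℝ) (hω : ω ≠ 0) (hr : 0 < r) {x y : ℝ} (hx : 0 ≤ x) (hy : 0 ≤ y) :
    (greenBessel l (p + 1) ω r x y) ^ 2 * ω ^ 2 * x ^ (p + 1 - 1) * y ^ (p + 1 - 1)
      = x ^ (K + 1) * y ^ (K + 1) * (1 / (max x y) ^ K - 1 / r ^ K) ^ 2 / (K : ℝ) ^ 2 := by
  have hrpow : ∀ a e : ℝ, Real.rpow a e = a ^ e := fun _ _ => rfl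
  have e1 : (l : ℝ) + ((p + 1 : ℕ) : ℝ) - 1 = ((l + p : ℕ) : ℝ) := by push_cast; ring
  have e2 : 2 * (l : ℝ) + ((p + 1 : ℕ) : ℝ) - 2 = ((K : ℕ) : ℝ) := by
    have h := congrArg (Nat.cast : ℕ → ℝ) hK
    push_cast at h ⊢
    linarith
  simp only [greenBessel, hrpow, e1, e2, Real.rpow_natCast, Nat.add_sub_cancel]
  have hK0' : K + 1 ≠ 0 := by omega
  rcases hy.eq_or_lt with rfl | hy
  · have h1 : l + p ≠ 0 := by omega
    simp [zero_pow h1, zero_pow hK0']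
  rcases hx.eq_or_lt with rfl | hx
  · by_cases hl : l = 0
    · have hp : p ≠ 0 := by omega
      simp [zero_pow hp, zero_pow hK0']
    · simp [zero_pow hl, zero_pow hK0']
  · have hy0 : y ≠ 0 := ne_of_gt hy
    have hKne : (K : ℝ) ≠ 0 := Nat.cast_ne_zero.mpr (by omega)
    have hmax : max x y ≠ 0 := ne_of_gt (lt_of_lt_of_le hy (le_max_right x y))
    have hr0 : r ≠ 0 := ne_of_gt hr
    rw [show K + 1 = 2 * l + p from hK.symm]
    have h1 : (max x y) ^ K ≠ 0 := pow_ne_zero _ hmax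
    have h2 : r ^ K ≠ 0 := pow_ne_zero _ hr0
    have h3 : y ^ p ≠ 0 := pow_ne_zero _ hy0
    field_simp
    ring

/-- Symmetrization of a double integral over a square. -/
lemma double_swap {r : ℝ} (hr : 0 < r) (G : ℝ → ℝ → ℝ)
    (hmeas : Measurable (uncurry G)) (C : ℝ)
    (hbd : ∀ x ∈ Ioc (0:ℝ) r, ∀ y ∈ Ioc (0:ℝ) r, |G x y| ≤ C)
    (hsymm : ∀ x y, G x y = G y x) :
    ∫ x in (0:ℝ)..r, ∫ y in (0:ℝ)..r, G x y
      = 2 * ∫ x in Ioc (0:ℝ) r, ∫ y in Ioc (0:ℝ) x, G x y := by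
  set μ := volume.restrict (Ioc (0:ℝ) r) with hμ
  haveI : IsFiniteMeasure μ := ⟨by
    rw [Measure.restrict_apply_univ]; exact measure_Ioc_lt_top⟩
  have hprod : μ.prod μ = (volume.prod volume).restrict (Ioc (0:ℝ) r ×ˢ Ioc (0:ℝ) r) :=
    Measure.prod_restrict _ _
  have hint : Integrable (uncurry G) (μ.prod μ) := by
    refine (integrable_const C).mono' hmeas.aestronglyMeasurable ?_
    rw [hprod]
    refine (ae_restrict_iff' (measurableSet_Ioc.prod measurableSet_Ioc)).2 ?_
    filter_upwards with p hp
    simpa [Real.norm_eq_abs, Function.uncurry_def] using hbd p.1 hp.1 p.2 hp.2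
  have hS : MeasurableSet {p : ℝ × ℝ | p.2 ≤ p.1} :=
    (isClosed_le continuous_snd continuous_fst).measurableSet
  have hT : MeasurableSet {p : ℝ × ℝ | p.1 < p.2} :=
    (isOpen_lt continuous_fst continuous_snd).measurableSet
  have hT' : MeasurableSet {p : ℝ × ℝ | p.2 < p.1} :=
    (isOpen_lt continuous_snd continuous_fst).measurableSet
  have hD : MeasurableSet {p : ℝ × ℝ | p.1 = p.2} :=
    (isClosed_eq continuous_fst continuous_snd).measurableSet
  have hDnull : (μ.prod μ) {p : ℝ × ℝ | p.1 = p.2} = 0 := by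
    rw [Measure.prod_apply hD]
    have h0 : ∀ x : ℝ, μ (Prod.mk x ⁻¹' {p : ℝ × ℝ | p.1 = p.2}) = 0 := by
      intro x
      have hxs : Prod.mk x ⁻¹' {p : ℝ × ℝ | p.1 = p.2} = {x} := by
        ext y; simp [eq_comm]
      rw [hxs, hμ, Measure.restrict_apply (measurableSet_singleton x)]
      exact measure_mono_null inter_subset_left Real.volume_singleton
    simp [h0]
  have hiS := hint.indicator hS
  have hiT := hint.indicator hT
  have hiT' := hint.indicator hT'
  have hiD := hint.indicator hD
  have hTT' : ∫ p, indicator {p : ℝ × ℝ | p.1 < p.2} (uncurry G) p ∂(μ.prod μ)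
      = ∫ p, indicator {p : ℝ × ℝ | p.2 < p.1} (uncurry G) p ∂(μ.prod μ) := by
    have hsw := MeasureTheory.integral_prod_swap (μ := μ) (ν := μ)
      (f := indicator {p : ℝ × ℝ | p.1 < p.2} (uncurry G))
    rw [← hsw]
    refine integral_congr_ae (Filter.Eventually.of_forall fun z => ?_)
    simp only [indicator_apply, mem_setOf_eq, Prod.fst_swap, Prod.snd_swap]
    rcases lt_or_ge z.2 z.1 with h | h
    · rw [if_pos h, if_pos h]
      simp [uncurry, hsymm z.2 z.1]
    · rw [if_neg (not_lt.mpr h), if_neg (not_lt.mpr h)]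
  have hdiag0 : ∫ p, indicator {p : ℝ × ℝ | p.1 = p.2} (uncurry G) p ∂(μ.prod μ) = 0 := by
    rw [integral_indicator hD, Measure.restrict_eq_zero.mpr hDnull, integral_zero_measure]
  have hSsplit : ∫ p, indicator {p : ℝ × ℝ | p.2 ≤ p.1} (uncurry G) p ∂(μ.prod μ)
      = ∫ p, indicator {p : ℝ × ℝ | p.2 < p.1} (uncurry G) p ∂(μ.prod μ) := by
    have heq : ∀ p : ℝ × ℝ, indicator {p : ℝ × ℝ | p.2 ≤ p.1} (uncurry G) p
        = indicator {p : ℝ × ℝ | p.2 < p.1} (uncurry G) p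
          + indicator {p : ℝ × ℝ | p.1 = p.2} (uncurry G) p := by
      intro p
      simp only [indicator_apply, mem_setOf_eq]
      rcases lt_trichotomy p.2 p.1 with h | h | h
      · rw [if_pos h.le, if_pos h, if_neg (ne_of_gt h), add_zero]
      · rw [if_pos h.le, if_neg (by simp [h]), if_pos h.symm, zero_add]
      · rw [if_neg (not_le.mpr h), if_neg (asymm h), if_neg (ne_of_lt h), add_zero]
    rw [integral_congr_ae (Filter.Eventually.of_forall heq), integral_add hiT' hiD, hdiag0,
      add_zero]
  have hdecomp : ∀ p : ℝ × ℝ, uncurry G p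
      = indicator {p : ℝ × ℝ | p.2 ≤ p.1} (uncurry G) p
        + indicator {p : ℝ × ℝ | p.1 < p.2} (uncurry G) p := by
    intro p
    simp only [indicator_apply, mem_setOf_eq]
    rcases le_or_gt p.2 p.1 with h | h
    · rw [if_pos h, if_neg (not_lt.mpr h), add_zero]
    · rw [if_neg (not_le.mpr h), if_pos h, zero_add]
  have key : ∫ p, uncurry G p ∂(μ.prod μ)
      = 2 * ∫ p, indicator {p : ℝ × ℝ | p.2 ≤ p.1} (uncurry G) p ∂(μ.prod μ) := by
    calc ∫ p, uncurry G p ∂(μ.prod μ)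
        = ∫ p, (indicator {p : ℝ × ℝ | p.2 ≤ p.1} (uncurry G) p
            + indicator {p : ℝ × ℝ | p.1 < p.2} (uncurry G) p) ∂(μ.prod μ) :=
          integral_congr_ae (Filter.Eventually.of_forall hdecomp)
      _ = (∫ p, indicator {p : ℝ × ℝ | p.2 ≤ p.1} (uncurry G) p ∂(μ.prod μ))
            + ∫ p, indicator {p : ℝ × ℝ | p.1 < p.2} (uncurry G) p ∂(μ.prod μ) :=
          integral_add hiS hiT
      _ = _ := by rw [hTT', ← hSsplit]; ring
  rw [intervalIntegral.integral_of_le hr.le]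
  simp only [intervalIntegral.integral_of_le hr.le]
  rw [← hμ]
  rw [show (∫ x, (∫ y, G x y ∂μ) ∂μ) = ∫ p, uncurry G p ∂(μ.prod μ) from
    (integral_prod _ hint).symm, key]
  congr 1
  rw [integral_prod _ hiS, hμ]
  refine setIntegral_congr_fun measurableSet_Ioc fun x hx => ?_
  have hind : ∀ y : ℝ, indicator {p : ℝ × ℝ | p.2 ≤ p.1} (uncurry G) (x, y)
      = indicator (Iic x) (G x) y := by
    intro y
    simp only [indicator_apply, mem_setOf_eq, mem_Iic]
    rfl
  simp only [hind]
  rw [← hμ, setIntegral_indicator measurableSet_Iic]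
  rw [show Ioc (0:ℝ) r ∩ Iic x = Ioc (0:ℝ) x by
    ext y
    simp only [mem_inter_iff, mem_Ioc, mem_Iic]
    exact ⟨fun h => ⟨h.1.1, h.2⟩, fun h => ⟨⟨h.1, h.2.trans hx.2⟩, h.2⟩⟩]

end Aux

set_option maxHeartbeats 1000000 in
/-- The `L²`-norm of the Green function `g_l` satisfies
`∫_0^r ∫_0^r g_l(x,y)² ω² x^{m-1} y^{m-1} dy dx = r⁴/(2(2l+m)²(2+2l+m))`. -/
theorem greenBessel_L2_norm (l m : ℕ) (hm : 1 ≤ m)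
    (hβ : 0 < 2 * (l:ℝ) + (m:ℝ) - 2) (r ω : ℝ) (hr : 0 < r) (hω : 0 < ω) :
    (∫ x in (0:ℝ)..r, ∫ y in (0:ℝ)..r,
        (greenBessel l m ω r x y) ^ 2 * ω ^ 2 * x ^ (m - 1) * y ^ (m - 1)) =
      r ^ 4 / (2 * (2 * (l:ℝ) + (m:ℝ)) ^ 2 * (2 + 2 * (l:ℝ) + (m:ℝ))) := by
  obtain ⟨p, rfl⟩ : ∃ p, m = p + 1 := ⟨m - 1, (Nat.succ_pred_eq_of_pos hm).symm⟩
  have h2 : 2 ≤ 2 * l + p := by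
    have h1 : (1 : ℝ) < ((2 * l + p : ℕ) : ℝ) := by push_cast at hβ ⊢; linarith
    have := Nat.one_lt_cast.mp h1
    omega
  obtain ⟨K, hK⟩ : ∃ K, 2 * l + p = K + 1 := ⟨2 * l + p - 1, by omega⟩
  have hK1 : 1 ≤ K := by omega
  have hω0 : ω ≠ 0 := ne_of_gt hω
  have hr0 : r ≠ 0 := ne_of_gt hr
  have hK0 : (K : ℝ) ≠ 0 := Nat.cast_ne_zero.mpr (by omega)
  have hKpos : (0:ℝ) < (K:ℝ) := by positivity
  set G : ℝ → ℝ → ℝ := fun x y =>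
    x ^ (K + 1) * y ^ (K + 1) * (1 / (max x y) ^ K - 1 / r ^ K) ^ 2 / (K : ℝ) ^ 2 with hG
  have step1 : (∫ x in (0:ℝ)..r, ∫ y in (0:ℝ)..r,
      (greenBessel l (p + 1) ω r x y) ^ 2 * ω ^ 2 * x ^ (p + 1 - 1) * y ^ (p + 1 - 1))
      = ∫ x in (0:ℝ)..r, ∫ y in (0:ℝ)..r, G x y := by
    refine intervalIntegral.integral_congr fun x hx => ?_
    rw [uIcc_of_le hr.le] at hx
    refine intervalIntegral.integral_congr fun y hy => ?_
    rw [uIcc_of_le hr.le] at hy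
    exact green_sq_eq l p K hK hK1 ω r hω0 hr hx.1 hy.1
  rw [step1]
  have hmeas : Measurable (Function.uncurry G) := by
    simp only [hG, Function.uncurry]
    fun_prop
  have hsymm : ∀ x y, G x y = G y x := by
    intro x y
    simp only [hG, max_comm x y]
    ring
  have hbd : ∀ x ∈ Ioc (0:ℝ) r, ∀ y ∈ Ioc (0:ℝ) r, |G x y| ≤ r ^ 2 / (K : ℝ) ^ 2 := by
    intro x hx y hy
    have hM0 : 0 < max x y := lt_of_lt_of_le hx.1 (le_max_left x y)
    have hMr : max x y ≤ r := max_le hx.2 hy.2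
    have hMK : (0:ℝ) < (max x y) ^ K := pow_pos hM0 K
    have hrK : (0:ℝ) < r ^ K := pow_pos hr K
    have hd0 : 0 ≤ 1 / (max x y) ^ K - 1 / r ^ K := by
      have hle : (max x y) ^ K ≤ r ^ K := pow_le_pow_left₀ hM0.le hMr K
      have := one_div_le_one_div_of_le hMK hle
      linarith
    have hnonneg : 0 ≤ G x y := by
      simp only [hG]
      have := sq_nonneg (1 / (max x y) ^ K - 1 / r ^ K)
      have h1 : (0:ℝ) ≤ x ^ (K + 1) := pow_nonneg hx.1.le _
      have h2 : (0:ℝ) ≤ y ^ (K + 1) := pow_nonneg hy.1.le _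
      positivity
    rw [abs_of_nonneg hnonneg]
    simp only [hG]
    rw [div_le_div_iff_of_pos_right (by positivity : (0:ℝ) < (K:ℝ)^2)]
    have e1 : x ^ (K + 1) ≤ (max x y) ^ (K + 1) :=
      pow_le_pow_left₀ hx.1.le (le_max_left x y) _
    have e2 : y ^ (K + 1) ≤ (max x y) ^ (K + 1) :=
      pow_le_pow_left₀ hy.1.le (le_max_right x y) _
    have e3 : (1 / (max x y) ^ K - 1 / r ^ K) ^ 2 ≤ (1 / (max x y) ^ K) ^ 2 :=
      pow_le_pow_left₀ hd0 (sub_le_self _ (by positivity)) 2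
    calc x ^ (K + 1) * y ^ (K + 1) * (1 / (max x y) ^ K - 1 / r ^ K) ^ 2
        ≤ (max x y) ^ (K + 1) * (max x y) ^ (K + 1) * (1 / (max x y) ^ K) ^ 2 := by
          refine mul_le_mul (mul_le_mul e1 e2 (pow_nonneg hy.1.le _)
            (pow_nonneg hM0.le _)) e3 (sq_nonneg _) ?_
          exact mul_nonneg (pow_nonneg hM0.le _) (pow_nonneg hM0.le _)
      _ = (max x y) ^ 2 := by
          field_simp
          ring
      _ ≤ r ^ 2 := pow_le_pow_left₀ hM0.le hMr 2
  rw [double_swap hr G hmeas (r ^ 2 / (K : ℝ) ^ 2) hbd hsymm]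
  have inner_eq : ∀ x ∈ Ioc (0:ℝ) r, (∫ y in Ioc (0:ℝ) x, G x y)
      = (x ^ 3 - 2 * (1 / r ^ K) * x ^ (K + 3) + (1 / r ^ K) ^ 2 * x ^ (2 * K + 3))
          / ((K : ℝ) ^ 2 * ((K : ℝ) + 2)) := by
    intro x hx
    rw [← intervalIntegral.integral_of_le hx.1.le]
    have hcg : EqOn (fun y => G x y)
        (fun y => (x ^ (K + 1) * (1 / x ^ K - 1 / r ^ K) ^ 2 / (K : ℝ) ^ 2) * y ^ (K + 1))
        (uIcc 0 x) := by
      intro y hy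
      rw [uIcc_of_le hx.1.le] at hy
      have hmx : max x y = x := max_eq_left hy.2
      simp only [hG, hmx]
      ring
    rw [intervalIntegral.integral_congr hcg, intervalIntegral.integral_const_mul, integral_pow,
      zero_pow (Nat.succ_ne_zero (K + 1))]
    have hx0 : x ≠ 0 := ne_of_gt hx.1
    have hxK : x ^ K ≠ 0 := pow_ne_zero _ hx0
    have hrK : r ^ K ≠ 0 := pow_ne_zero _ hr0
    have hK2 : (K : ℝ) + 2 ≠ 0 := by positivity
    push_cast
    field_simp
    ring
  rw [setIntegral_congr_fun measurableSet_Ioc inner_eq,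
    ← intervalIntegral.integral_of_le hr.le]
  have hint3 : IntervalIntegrable (fun x : ℝ => x ^ 3) volume 0 r :=
    intervalIntegral.intervalIntegrable_pow 3
  have hintK3 : IntervalIntegrable (fun x : ℝ => 2 * (1 / r ^ K) * x ^ (K + 3)) volume 0 r :=
    (intervalIntegral.intervalIntegrable_pow (K + 3)).const_mul _
  have hint2K3 : IntervalIntegrable (fun x : ℝ => (1 / r ^ K) ^ 2 * x ^ (2 * K + 3)) volume 0 r :=
    (intervalIntegral.intervalIntegrable_pow (2 * K + 3)).const_mul _
  rw [intervalIntegral.integral_div, intervalIntegral.integral_add (hint3.sub hintK3) hint2K3,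
    intervalIntegral.integral_sub hint3 hintK3, intervalIntegral.integral_const_mul,
    intervalIntegral.integral_const_mul, integral_pow, integral_pow, integral_pow]
  simp only [zero_pow (Nat.succ_ne_zero _), Nat.cast_add, Nat.cast_mul, Nat.cast_ofNat]
  have hpR : (p : ℝ) = (K : ℝ) + 1 - 2 * (l : ℝ) := by
    have h := congrArg (Nat.cast : ℕ → ℝ) hK
    push_cast at h
    linarith
  have hrKne : r ^ K ≠ 0 := pow_ne_zero _ hr0
  have hrK4 : r ^ (K + 3 + 1) = r ^ K * r ^ 4 := by rw [← pow_add]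
  have hrK24 : r ^ (2 * K + 3 + 1) = (r ^ K) ^ 2 * r ^ 4 := by
    rw [← pow_mul, ← pow_add]; congr 1; omega
  rw [hrK4, hrK24]
  have hK4 : (K : ℝ) + 3 + 1 ≠ 0 := by positivity
  have hK24 : 2 * (K : ℝ) + 3 + 1 ≠ 0 := by positivity
  have hK2 : (K : ℝ) + 2 ≠ 0 := by positivity
  have h1 : 2 * (l : ℝ) + ((K : ℝ) + 1 - 2 * (l : ℝ) + 1) = (K : ℝ) + 2 := by ring
  have h2 : 2 + 2 * (l : ℝ) + ((K : ℝ) + 1 - 2 * (l : ℝ) + 1) = (K : ℝ) + 4 := by ring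
  push_cast
  rw [hpR, h1, h2]
  have hK2pos : (0:ℝ) < (K : ℝ) + 2 := by positivity
  have hK4pos : (0:ℝ) < (K : ℝ) + 4 := by positivity
  field_simp
  ring
end

section
/- With A_k = k! ∑_{i=1}^∞ a_i²/λ_i^k where 0 < λ₁ < λ₂ ≤ ⋯ → ∞, a₁ ≠ 0, and ∑ a_i² < ∞, one has lim_{k→∞} k·A_{k-1}/A_k = λ₁. -/
open Filter

/-- Hurtado–Markvorsen–Palmer formula: with `A_k = k! ∑_i a_i²/λ_i^k` where
`0 < λ₁ < λ₂ ≤ ⋯ → ∞`, `a₁ ≠ 0` and `∑ a_i² < ∞`, one has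
`lim_{k→∞} k·A_{k-1}/A_k = λ₁`.  (Here `A k` denotes `A_{k}` with indices
starting at `0` for the sequences `a`, `λ`.) -/
theorem momentum_ratio_tendsto_first_eigenvalue (a lam : ℕ → ℝ)
    (h0 : 0 < lam 0) (h01 : lam 0 < lam 1) (hmono : Monotone lam)
    (hlim : Tendsto lam atTop atTop)
    (ha0 : a 0 ≠ 0) (hsum : Summable fun i => (a i) ^ 2)
    (A : ℕ → ℝ)
    (hA : ∀ k : ℕ, A k = (Nat.factorial k : ℝ) * ∑' i : ℕ, (a i) ^ 2 / (lam i) ^ k) :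
    Tendsto (fun k : ℕ => ((k : ℝ) + 1) * A k / A (k + 1)) atTop (nhds (lam 0)) := by
  have hpos : ∀ i, 0 < lam i := fun i => lt_of_lt_of_le h0 (hmono (Nat.zero_le i))
  set r : ℕ → ℝ := fun i => lam 0 / lam i with hr
  have hr0 : r 0 = 1 := div_self (ne_of_gt h0)
  have hrpos : ∀ i, 0 < r i := fun i => div_pos h0 (hpos i)
  have hrle : ∀ i, r i ≤ 1 := fun i => div_le_one_of_le₀ (hmono (Nat.zero_le i)) (hpos i).le
  have hrlt : ∀ i, 1 ≤ i → r i < 1 := fun i hi =>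
    (div_lt_one (hpos i)).2 (lt_of_lt_of_le h01 (hmono hi))
  set T : ℕ → ℝ := fun k => ∑' i, (a i) ^ 2 * r i ^ k with hT
  -- each T k is positive
  have hfnonneg : ∀ k i, 0 ≤ (a i) ^ 2 * r i ^ k := fun k i =>
    mul_nonneg (sq_nonneg _) (pow_nonneg (hrpos i).le k)
  have hfle : ∀ k i, (a i) ^ 2 * r i ^ k ≤ (a i) ^ 2 := by
    intro k i
    have : r i ^ k ≤ 1 := pow_le_one₀ (hrpos i).le (hrle i)
    calc (a i) ^ 2 * r i ^ k ≤ (a i) ^ 2 * 1 :=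
          mul_le_mul_of_nonneg_left this (sq_nonneg _)
      _ = (a i) ^ 2 := mul_one _
  have hTsummable : ∀ k, Summable fun i => (a i) ^ 2 * r i ^ k := fun k =>
    hsum.of_nonneg_of_le (hfnonneg k) (hfle k)
  have hTpos : ∀ k, 0 < T k := by
    intro k
    refine Summable.tsum_pos (hTsummable k) (hfnonneg k) 0 ?_
    rw [hr0, one_pow, mul_one]
    exact lt_of_le_of_ne (sq_nonneg _) (Ne.symm (pow_ne_zero 2 ha0))
  -- T tends to a 0 ^ 2
  have hTlim : Tendsto T atTop (nhds ((a 0) ^ 2)) := by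
    have key : Tendsto T atTop
        (nhds (∑' i : ℕ, (if i = 0 then (a 0) ^ 2 else 0))) := by
      apply tendsto_tsum_of_dominated_convergence (bound := fun i => (a i) ^ 2) hsum
      · intro i
        rcases Nat.eq_zero_or_pos i with rfl | hi
        · simp [hr0]
        · simp only [Nat.pos_iff_ne_zero.mp hi, if_neg (Nat.pos_iff_ne_zero.mp hi)]
          have : Tendsto (fun k => r i ^ k) atTop (nhds 0) :=
            tendsto_pow_atTop_nhds_zero_of_lt_one (hrpos i).le (hrlt i hi)
          simpa using (this.const_mul ((a i) ^ 2))
      · filter_upwards with k i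
        rw [Real.norm_eq_abs, abs_of_nonneg (hfnonneg k i)]
        exact hfle k i
    simpa [tsum_ite_eq] using key
  -- relation A k = k! * T k / lam 0 ^ k
  have hAT : ∀ k, A k = (Nat.factorial k : ℝ) * (T k / lam 0 ^ k) := by
    intro k
    rw [hA k]
    congr 1
    rw [← tsum_div_const]
    congr 1
    funext i
    have h1 : (lam i : ℝ) ^ k ≠ 0 := pow_ne_zero _ (hpos i).ne'
    have h2 : (lam 0 : ℝ) ^ k ≠ 0 := pow_ne_zero _ h0.ne'
    field_simp [hr, div_pow]
    simp only [hr, div_pow]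
    field_simp
  have hratio : ∀ k : ℕ, ((k : ℝ) + 1) * A k / A (k + 1) = lam 0 * T k / T (k + 1) := by
    intro k
    have hTk1 : T (k + 1) ≠ 0 := (hTpos _).ne'
    rw [hAT k, hAT (k + 1)]
    set x : ℝ := T k with hx
    set y : ℝ := T (k + 1) with hy
    have hfac : ((Nat.factorial (k + 1) : ℝ)) = ((k : ℝ) + 1) * (Nat.factorial k : ℝ) := by
      push_cast [Nat.factorial_succ]; ring
    have hfk : (Nat.factorial k : ℝ) ≠ 0 := Nat.cast_ne_zero.mpr (Nat.factorial_ne_zero k)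
    have hl : (lam 0 : ℝ) ^ k ≠ 0 := pow_ne_zero _ h0.ne'
    have hk1 : ((k : ℝ) + 1) ≠ 0 := by positivity
    rw [hfac, pow_succ]
    field_simp
  have hmain : Tendsto (fun k : ℕ => lam 0 * T k / T (k + 1)) atTop (nhds (lam 0)) := by
    have h1 : Tendsto (fun k : ℕ => lam 0 * T k) atTop (nhds (lam 0 * (a 0) ^ 2)) :=
      hTlim.const_mul _
    have h2 : Tendsto (fun k : ℕ => T (k + 1)) atTop (nhds ((a 0) ^ 2)) :=
      hTlim.comp (tendsto_add_atTop_nat 1)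
    have ha2 : (a 0) ^ 2 ≠ 0 := pow_ne_zero _ ha0
    have key := h1.div h2 ha2
    rw [mul_div_assoc, div_self ha2, mul_one] at key
    exact key
  simpa only [hratio] using hmain
end
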